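/- Let (Ω, 𝓕, P) be a probability space, let T, R : Ω → ℝ be independent random variables, let h : ℝ → ℝ be bounded and measurable, define Γ(t) = P(R ≥ t), and fix u ∈ ℝ with P(T ≥ u) > 0 and Γ(u) > 0. Assume Γ(T(ω)) > 0 for P-almost every ω and that ω ↦ 1{T(ω) ≤ R(ω)}·h(T(ω))/Γ(T(ω)) is P-integrable. Then P(T ≥ u and R ≥ u) = P(T ≥ u)·Γ(u), and consequently E[ 1{T ≤ R}·1{u ≤ T}·1{u ≤ R}·h(T)/Γ(T) ] / P(T ≥ u and R ≥ u) = ( E[ h(T)·1{u ≤ T} ] / P(T ≥ u) ) / Γ(u). -/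

import Mathlib

open MeasureTheory ProbabilityTheory

/-- Conditional-expectation computation for the IPCW transform. For
independent real random variables `T, R` on `(Ω, 𝓕, P)`, bounded measurable `h`,
`Γ(t) = P(R ≥ t)`, `u` with `P(T ≥ u) > 0` and `Γ(u) > 0`, `Γ(T) > 0` a.s., and
`1{T ≤ R}·h(T)/Γ(T)` integrable: `P(T ≥ u, R ≥ u) = P(T ≥ u)·Γ(u)`, and
`E[1{T ≤ R}·1{u ≤ T}·1{u ≤ R}·h(T)/Γ(T)] / P(T ≥ u, R ≥ u)
  = (E[h(T)·1{u ≤ T}] / P(T ≥ u)) / Γ(u)`. -/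
theorem stmt_12
    {Ω : Type*} [MeasurableSpace Ω] (P : Measure Ω) [IsProbabilityMeasure P]
    (T R : Ω → ℝ) (hT : Measurable T) (hR : Measurable R)
    (hindep : IndepFun T R P)
    (h : ℝ → ℝ) (hh_meas : Measurable h) (hh_bdd : ∃ M, ∀ x, |h x| ≤ M)
    (Γ : ℝ → ℝ) (hΓ : ∀ t, Γ t = (P {ω | t ≤ R ω}).toReal)
    (u : ℝ) (hTu : 0 < (P {ω | u ≤ T ω}).toReal) (hΓu : 0 < Γ u)
    (hΓpos : ∀ᵐ ω ∂P, 0 < Γ (T ω))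
    (hw_int : Integrable
      (fun ω => (if T ω ≤ R ω then (1 : ℝ) else 0) * h (T ω) / Γ (T ω)) P) :
    (P {ω | u ≤ T ω ∧ u ≤ R ω}).toReal = (P {ω | u ≤ T ω}).toReal * Γ u ∧
      (∫ ω, (if T ω ≤ R ω then (1 : ℝ) else 0) * (if u ≤ T ω then (1 : ℝ) else 0)
            * (if u ≤ R ω then (1 : ℝ) else 0) * h (T ω) / Γ (T ω) ∂P)
          / (P {ω | u ≤ T ω ∧ u ≤ R ω}).toReal
        = ((∫ ω, h (T ω) * (if u ≤ T ω then (1 : ℝ) else 0) ∂P)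
            / (P {ω | u ≤ T ω}).toReal) / Γ u := by
  -- Γ is antitone, hence measurable
  have hΓ_anti : Antitone Γ := by
    intro s t hst
    rw [hΓ, hΓ]
    exact ENNReal.toReal_mono (measure_ne_top _ _)
      (measure_mono (fun ω hw => le_trans hst hw))
  have hΓ_meas : Measurable Γ := hΓ_anti.measurable
  -- Part 1
  have h1 : (P {ω | u ≤ T ω ∧ u ≤ R ω}).toReal = (P {ω | u ≤ T ω}).toReal * Γ u := by
    have hmul := hindep.measure_inter_preimage_eq_mul (Set.Ici u) (Set.Ici u)
      measurableSet_Ici measurableSet_Ici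
    have hset : {ω | u ≤ T ω ∧ u ≤ R ω} = T ⁻¹' Set.Ici u ∩ R ⁻¹' Set.Ici u := rfl
    rw [hset, hmul, ENNReal.toReal_mul, hΓ u]
    rfl
  refine ⟨h1, ?_⟩
  -- Setup: laws of T, R and the product structure
  set μ : Measure ℝ := P.map T with hμ
  set ν : Measure ℝ := P.map R with hν
  haveI : IsProbabilityMeasure μ := Measure.isProbabilityMeasure_map hT.aemeasurable
  haveI : IsProbabilityMeasure ν := Measure.isProbabilityMeasure_map hR.aemeasurable
  have hmap : P.map (fun ω => (T ω, R ω)) = μ.prod ν :=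
    (indepFun_iff_map_prod_eq_prod_map_map hT.aemeasurable hR.aemeasurable).mp hindep
  set f : ℝ × ℝ → ℝ :=
    fun p => (if p.1 ≤ p.2 then (1 : ℝ) else 0)
      * ((if u ≤ p.1 then (1 : ℝ) else 0) * h p.1 / Γ p.1) with hf
  have hf_meas : Measurable f := by
    apply Measurable.mul
    · exact Measurable.ite (measurableSet_le measurable_fst measurable_snd)
        measurable_const measurable_const
    · exact Measurable.div
        (Measurable.mul
          (Measurable.ite (measurableSet_le measurable_const measurable_fst)
            measurable_const measurable_const)
          (hh_meas.comp measurable_fst))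
        (hΓ_meas.comp measurable_fst)
  -- Integrability of f ∘ (T, R)
  have hfTR_int : Integrable (fun ω => f (T ω, R ω)) P := by
    refine hw_int.mono
      ((hf_meas.comp (hT.prodMk hR)).aestronglyMeasurable) ?_
    filter_upwards with ω
    by_cases huT : u ≤ T ω
    · simp only [hf, huT, if_true]
      rw [one_mul]
      rw [mul_div_assoc]
    · have hz : f (T ω, R ω) = 0 := by simp [hf, huT]
      rw [hz, norm_zero]
      exact norm_nonneg _
  -- LHS integrand equals f ∘ (T, R)
  have hLHS_eq : (∫ ω, (if T ω ≤ R ω then (1 : ℝ) else 0) * (if u ≤ T ω then (1 : ℝ) else 0)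
            * (if u ≤ R ω then (1 : ℝ) else 0) * h (T ω) / Γ (T ω) ∂P)
      = ∫ ω, f (T ω, R ω) ∂P := by
    refine integral_congr_ae (Filter.Eventually.of_forall fun ω => ?_)
    by_cases hTR : T ω ≤ R ω
    · by_cases huT : u ≤ T ω
      · have huR : u ≤ R ω := le_trans huT hTR
        simp only [hf, hTR, huT, huR, if_true]
        ring
      · simp [hf, hTR, huT]
    · simp [hf, hTR]
  -- Transfer to the product measure
  have hint_prod : Integrable f (μ.prod ν) := by
    rw [← hmap]
    rw [integrable_map_measure (by rw [hmap]; exact hf_meas.aestronglyMeasurable)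
      (hT.prodMk hR).aemeasurable]
    exact hfTR_int
  have hstep1 : ∫ ω, f (T ω, R ω) ∂P = ∫ p, f p ∂(μ.prod ν) := by
    rw [← hmap, integral_map (hT.prodMk hR).aemeasurable
      (by rw [hmap]; exact hf_meas.aestronglyMeasurable)]
  -- Fubini and the inner integral
  have hν_Ici : ∀ t : ℝ, (ν (Set.Ici t)).toReal = Γ t := by
    intro t
    rw [hν, Measure.map_apply hR measurableSet_Ici, hΓ]
    rfl
  have hstep2 : ∫ p, f p ∂(μ.prod ν)
      = ∫ t, ((if u ≤ t then (1 : ℝ) else 0) * h t / Γ t) * Γ t ∂μ := by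
    rw [integral_prod f hint_prod]
    refine integral_congr_ae (Filter.Eventually.of_forall fun t => ?_)
    dsimp only
    have : ∫ r, f (t, r) ∂ν
        = (∫ r, (if t ≤ r then (1 : ℝ) else 0) ∂ν)
          * ((if u ≤ t then (1 : ℝ) else 0) * h t / Γ t) := by
      rw [← integral_mul_const]
    rw [this]
    have hind : (fun r => if t ≤ r then (1 : ℝ) else 0) = (Set.Ici t).indicator 1 := by
      ext r; simp [Set.indicator_apply]
    rw [hind, integral_indicator_one measurableSet_Ici, measureReal_def, hν_Ici]
    ring
  -- Cancel Γ using a.e. positivity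
  have hΓpos_map : ∀ᵐ t ∂μ, 0 < Γ t := by
    rw [hμ]
    rw [ae_map_iff hT.aemeasurable (measurableSet_lt measurable_const hΓ_meas)]
    exact hΓpos
  have hstep3 : ∫ t, ((if u ≤ t then (1 : ℝ) else 0) * h t / Γ t) * Γ t ∂μ
      = ∫ t, h t * (if u ≤ t then (1 : ℝ) else 0) ∂μ := by
    refine integral_congr_ae ?_
    filter_upwards [hΓpos_map] with t ht
    rw [div_mul_cancel₀ _ ht.ne']
    ring
  have hstep4 : ∫ t, h t * (if u ≤ t then (1 : ℝ) else 0) ∂μ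
      = ∫ ω, h (T ω) * (if u ≤ T ω then (1 : ℝ) else 0) ∂P := by
    rw [hμ, integral_map hT.aemeasurable]
    exact (Measurable.mul hh_meas
      (Measurable.ite measurableSet_Ici measurable_const measurable_const)
      ).aestronglyMeasurable
  -- Put it together
  rw [hLHS_eq, hstep1, hstep2, hstep3, hstep4, h1]
  rw [div_div]
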